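/- In every idempotent residuated chain, the divisions are given by: x\y = x^r ∨ y if x ≤ y, and x\y = x^r ∧ y if y < x; similarly y/x = x^ℓ ∨ y if x ≤ y, and y/x = x^ℓ ∧ y if y < x. -/
import Mathlib


/-- In every idempotent residuated chain the divisions are given by:
`x\y = x^r ∨ y` if `x ≤ y`, `x\y = x^r ∧ y` if `y < x`; and
`y/x = x^ℓ ∨ y` if `x ≤ y`, `y/x = x^ℓ ∧ y` if `y < x`. -/
theorem stmt7 {A : Type*} [LinearOrder A] [Monoid A]
    (ld rd : A → A → A)
    (resl : ∀ x y z : A, x * y ≤ z ↔ y ≤ ld x z)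
    (resr : ∀ x y z : A, x * y ≤ z ↔ x ≤ rd z y)
    (idem : ∀ x : A, x * x = x) :
    ∀ x y : A,
      (x ≤ y → ld x y = ld x 1 ⊔ y) ∧
      (y < x → ld x y = ld x 1 ⊓ y) ∧
      (x ≤ y → rd y x = rd 1 x ⊔ y) ∧
      (y < x → rd y x = rd 1 x ⊓ y) := by
  -- monotonicity of multiplication in each argument
  have mono_r : ∀ a b b' : A, b ≤ b' → a * b ≤ a * b' := by
    intro a b b' h
    exact (resl a b (a * b')).mpr (h.trans ((resl a b' (a * b')).mp le_rfl))
  have mono_l : ∀ a a' b : A, a ≤ a' → a * b ≤ a' * b := by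
    intro a a' b h
    exact (resr a b (a' * b)).mpr (h.trans ((resr a' b (a' * b)).mp le_rfl))
  -- the product lies between the two factors
  have hi : ∀ a b : A, a ≤ b → a * b ≤ b := by
    intro a b h
    have := mono_l a b b h; rwa [idem b] at this
  have hi' : ∀ a b : A, a ≤ b → b * a ≤ b := by
    intro a b h
    have := mono_r b a b h; rwa [idem b] at this
  have lo : ∀ a b : A, a ≤ b → a ≤ a * b := by
    intro a b h
    have := mono_r a a b h; rwa [idem a] at this
  have lo' : ∀ a b : A, a ≤ b → a ≤ b * a := by
    intro a b h
    have := mono_l a b a h; rwa [idem a] at this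
  -- evaluated divisions
  have divl : ∀ x z : A, x * ld x z ≤ z := fun x z => (resl x (ld x z) z).mpr le_rfl
  have divr : ∀ z y : A, rd z y * y ≤ z := fun z y => (resr (rd z y) y z).mpr le_rfl
  -- x * (x \ 1) ≤ x
  have K1 : ∀ x : A, x * ld x 1 ≤ x := by
    intro x
    have h1 : x * (x * ld x 1) ≤ x * 1 := mono_r x _ 1 (divl x 1)
    rwa [← mul_assoc, idem x, mul_one] at h1
  -- x * (x \ 1) ≤ x \ 1
  have K1' : ∀ x : A, x * ld x 1 ≤ ld x 1 := by
    intro x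
    have h1 : (x * ld x 1) * ld x 1 ≤ 1 * ld x 1 := mono_l _ 1 _ (divl x 1)
    rwa [mul_assoc, idem (ld x 1), one_mul] at h1
  -- (1 / x) * x ≤ x
  have K2 : ∀ x : A, rd 1 x * x ≤ x := by
    intro x
    have h1 : (rd 1 x * x) * x ≤ 1 * x := mono_l _ 1 x (divr 1 x)
    rwa [mul_assoc, idem x, one_mul] at h1
  -- (1 / x) * x ≤ 1 / x
  have K2' : ∀ x : A, rd 1 x * x ≤ rd 1 x := by
    intro x
    have h1 : rd 1 x * (rd 1 x * x) ≤ rd 1 x * 1 := mono_r _ _ 1 (divr 1 x)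
    rwa [← mul_assoc, idem (rd 1 x), mul_one] at h1
  intro x y
  refine ⟨?_, ?_, ?_, ?_⟩
  · -- x ≤ y → ld x y = ld x 1 ⊔ y
    intro hxy
    apply le_antisymm
    · by_contra h
      push_neg at h
      set t := ld x y with ht
      have h1 : ld x 1 < t := lt_of_le_of_lt le_sup_left h
      have h2 : y < t := lt_of_le_of_lt le_sup_right h
      have h3 : 1 < x * t := by
        by_contra h3
        push_neg at h3
        exact absurd ((resl x t 1).mp h3) (not_le_of_gt h1)
      have h4 : t ≤ x * t := by
        have := mono_l 1 (x * t) t h3.le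
        rwa [one_mul, mul_assoc, idem t] at this
      exact absurd (h4.trans (divl x y)) (not_le_of_gt h2)
    · apply sup_le
      · exact (resl x (ld x 1) y).mp ((K1 x).trans hxy)
      · exact (resl x y y).mp (hi x y hxy)
  · -- y < x → ld x y = ld x 1 ⊓ y
    intro hyx
    apply le_antisymm
    · apply le_inf
      · -- ld x y ≤ ld x 1, i.e. x * ld x y ≤ 1
        by_contra h
        push_neg at h
        have h3 : 1 < x * ld x y := by
          by_contra h3
          push_neg at h3
          exact absurd ((resl x (ld x y) 1).mp h3) (not_le_of_gt h)
        have h4 : x ≤ x * ld x y := by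
          have := mono_r x 1 (x * ld x y) h3.le
          rwa [mul_one, ← mul_assoc, idem x] at this
        exact absurd ((h4.trans (divl x y)).trans_lt hyx) (lt_irrefl x)
      · -- ld x y ≤ y
        by_contra h
        push_neg at h
        rcases le_total x (ld x y) with hc | hc
        · exact absurd (((lo x (ld x y) hc).trans (divl x y)).trans_lt hyx) (lt_irrefl x)
        · exact absurd (((lo' (ld x y) x hc).trans (divl x y)).trans_lt h) (lt_irrefl _)
    · rcases le_total (ld x 1) y with hc | hc
      · exact inf_le_left.trans ((resl x (ld x 1) y).mp ((K1' x).trans hc))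
      · refine inf_le_right.trans ((resl x y y).mp ?_)
        -- x * y ≤ y since y ≤ ld x 1
        have h1 : x * y ≤ 1 := (resl x y 1).mpr hc
        have h2 : (x * y) * y ≤ 1 * y := mono_l _ 1 y h1
        rwa [mul_assoc, idem y, one_mul] at h2
  · -- x ≤ y → rd y x = rd 1 x ⊔ y
    intro hxy
    apply le_antisymm
    · by_contra h
      push_neg at h
      set t := rd y x with ht
      have h1 : rd 1 x < t := lt_of_le_of_lt le_sup_left h
      have h2 : y < t := lt_of_le_of_lt le_sup_right h
      have h3 : 1 < t * x := by
        by_contra h3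
        push_neg at h3
        exact absurd ((resr t x 1).mp h3) (not_le_of_gt h1)
      have h4 : t ≤ t * x := by
        have := mono_r t 1 (t * x) h3.le
        rwa [mul_one, ← mul_assoc, idem t] at this
      exact absurd (h4.trans (divr y x)) (not_le_of_gt h2)
    · apply sup_le
      · exact (resr (rd 1 x) x y).mp ((K2 x).trans hxy)
      · exact (resr y x y).mp (hi' x y hxy)
  · -- y < x → rd y x = rd 1 x ⊓ y
    intro hyx
    apply le_antisymm
    · apply le_inf
      · -- rd y x ≤ rd 1 x, i.e. rd y x * x ≤ 1
        by_contra h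
        push_neg at h
        have h3 : 1 < rd y x * x := by
          by_contra h3
          push_neg at h3
          exact absurd ((resr (rd y x) x 1).mp h3) (not_le_of_gt h)
        have h4 : x ≤ rd y x * x := by
          have := mono_l 1 (rd y x * x) x h3.le
          rwa [one_mul, mul_assoc, idem x] at this
        exact absurd ((h4.trans (divr y x)).trans_lt hyx) (lt_irrefl x)
      · -- rd y x ≤ y
        by_contra h
        push_neg at h
        rcases le_total x (rd y x) with hc | hc
        · exact absurd (((lo' x (rd y x) hc).trans (divr y x)).trans_lt hyx) (lt_irrefl x)
        · exact absurd (((lo (rd y x) x hc).trans (divr y x)).trans_lt h) (lt_irrefl _)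
    · rcases le_total (rd 1 x) y with hc | hc
      · exact inf_le_left.trans ((resr (rd 1 x) x y).mp ((K2' x).trans hc))
      · refine inf_le_right.trans ((resr y x y).mp ?_)
        -- y * x ≤ y since y ≤ rd 1 x
        have h1 : y * x ≤ 1 := (resr y x 1).mpr hc
        have h2 : y * (y * x) ≤ y * 1 := mono_r y _ 1 h1
        rwa [← mul_assoc, idem y, mul_one] at h2
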